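/- Let G be a polynomial with real coefficients, all of whose roots are real, with deg G = n ≥ 1, let a > 0 and b be real. Then the function H(z) = G(z - ia)·e^{-ib} + G(z + ia)·e^{ib} is a polynomial of degree n or n-1 with real coefficients all of whose roots are real; moreover deg H = n if cos b ≠ 0 and deg H = n - 1 if cos b = 0. -/

import Mathlib

open Complex Polynomial

-- multiset product lemmas
lemma my_prod_le (f g : ℂ → ℝ) (s : Multiset ℂ) (h0 : ∀ r ∈ s, 0 ≤ f r)
    (h1 : ∀ r ∈ s, f r ≤ g r) : (s.map f).prod ≤ (s.map g).prod := by
  induction s using Multiset.induction_on with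
  | empty => simp
  | cons r t ih =>
    simp only [Multiset.map_cons, Multiset.prod_cons]
    have hr := h1 r (Multiset.mem_cons_self r t)
    have hr0 := h0 r (Multiset.mem_cons_self r t)
    exact mul_le_mul hr (ih (fun x hx => h0 x (Multiset.mem_cons_of_mem hx))
      (fun x hx => h1 x (Multiset.mem_cons_of_mem hx)))
      (Multiset.prod_nonneg (by
        intro x hx
        obtain ⟨y, hy, rfl⟩ := Multiset.mem_map.mp hx
        exact h0 y (Multiset.mem_cons_of_mem hy))) (le_trans hr0 hr)

lemma my_prod_lt (f g : ℂ → ℝ) (s : Multiset ℂ) (hs : s ≠ 0) (h0 : ∀ r ∈ s, 0 ≤ f r)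
    (h1 : ∀ r ∈ s, f r < g r) : (s.map f).prod < (s.map g).prod := by
  obtain ⟨r, hr⟩ := Multiset.exists_mem_of_ne_zero hs
  obtain ⟨t, rfl⟩ := Multiset.exists_cons_of_mem hr
  simp only [Multiset.map_cons, Multiset.prod_cons]
  have h0t : ∀ x ∈ t, 0 ≤ f x := fun x hx => h0 x (Multiset.mem_cons_of_mem hx)
  have h1t : ∀ x ∈ t, f x ≤ g x := fun x hx => le_of_lt (h1 x (Multiset.mem_cons_of_mem hx))
  have hPle : (t.map f).prod ≤ (t.map g).prod := my_prod_le f g t h0t h1t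
  have hPgpos : 0 < (t.map g).prod := by
    apply Multiset.prod_pos
    intro x hx
    obtain ⟨y, hy, rfl⟩ := Multiset.mem_map.mp hx
    exact lt_of_le_of_lt (h0 y (Multiset.mem_cons_of_mem hy)) (h1 y (Multiset.mem_cons_of_mem hy))
  calc f r * (t.map f).prod ≤ f r * (t.map g).prod :=
        mul_le_mul_of_nonneg_left hPle (h0 r (Multiset.mem_cons_self r t))
    _ < g r * (t.map g).prod :=
        mul_lt_mul_of_pos_right (h1 r (Multiset.mem_cons_self r t)) hPgpos

lemma my_factor_lt (z : ℂ) (a : ℝ) (ha : 0 < a) (hz : 0 < z.im) (r : ℂ) (hr : r.im = 0) :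
    ‖z - I * a - r‖ < ‖z + I * a - r‖ := by
  rw [Complex.norm_def, Complex.norm_def]
  apply Real.sqrt_lt_sqrt (Complex.normSq_nonneg _)
  simp only [Complex.normSq_apply, Complex.sub_re, Complex.sub_im, Complex.add_re,
    Complex.add_im, Complex.mul_re, Complex.mul_im, Complex.I_re, Complex.I_im,
    Complex.ofReal_re, Complex.ofReal_im, hr]
  nlinarith [sq_nonneg (z.re - r.re)]

lemma my_factor_lt' (z : ℂ) (a : ℝ) (ha : 0 < a) (hz : z.im < 0) (r : ℂ) (hr : r.im = 0) :
    ‖z + I * a - r‖ < ‖z - I * a - r‖ := by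
  rw [Complex.norm_def, Complex.norm_def]
  apply Real.sqrt_lt_sqrt (Complex.normSq_nonneg _)
  simp only [Complex.normSq_apply, Complex.sub_re, Complex.sub_im, Complex.add_re,
    Complex.add_im, Complex.mul_re, Complex.mul_im, Complex.I_re, Complex.I_im,
    Complex.ofReal_re, Complex.ofReal_im, hr]
  nlinarith [sq_nonneg (z.re - r.re)]

lemma my_abs_eval (P : ℂ[X]) (w : ℂ) :
    ‖P.eval w‖
      = ‖P.leadingCoeff‖ * (P.roots.map (fun r => ‖w - r‖)).prod := by
  conv_lhs => rw [(IsAlgClosed.splits P).eq_prod_roots]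
  rw [eval_mul, norm_mul, eval_C, eval_multiset_prod, Multiset.map_map,
    show ∀ s : Multiset ℂ, ‖s.prod‖ = (s.map (‖·‖)).prod from
      fun s => map_multiset_prod (normHom : ℂ →*₀ ℝ) s, Multiset.map_map]
  congr 1
  congr 1
  apply Multiset.map_congr rfl
  intro r _
  simp

theorem my_main (G : Polynomial ℝ)
    (hroots : ∀ z : ℂ, (G.map (algebraMap ℝ ℂ)).eval z = 0 → z.im = 0)
    (n : ℕ) (hdeg : G.natDegree = n) (hn : 1 ≤ n)
    (a b : ℝ) (ha : 0 < a)
    (H : Polynomial ℂ)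
    (hH : H = Polynomial.C (Complex.exp (-(b * I))) *
          (G.map (algebraMap ℝ ℂ)).comp (Polynomial.X - Polynomial.C (I * a))
        + Polynomial.C (Complex.exp (b * I)) *
          (G.map (algebraMap ℝ ℂ)).comp (Polynomial.X + Polynomial.C (I * a))) :
    (∀ k : ℕ, (H.coeff k).im = 0) ∧
    (∀ z : ℂ, H.eval z = 0 → z.im = 0) ∧
    (Real.cos b ≠ 0 → H.natDegree = n) ∧
    (Real.cos b = 0 → H.natDegree = n - 1) := by
  set Gc : ℂ[X] := G.map (algebraMap ℝ ℂ) with hGc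
  have hGne : G ≠ 0 := by intro h; rw [h] at hdeg; simp at hdeg; omega
  have hGcne : Gc ≠ 0 := by
    rw [hGc]
    exact (Polynomial.map_ne_zero_iff (algebraMap ℝ ℂ).injective).mpr hGne
  have hGcdeg : Gc.natDegree = n := by rw [hGc, natDegree_map]; exact hdeg
  have hlead : Gc.leadingCoeff ≠ 0 := leadingCoeff_ne_zero.mpr hGcne
  have hrootsre : ∀ r ∈ Gc.roots, r.im = 0 := fun r hr =>
    hroots r ((mem_roots hGcne).mp hr)
  have hcard : Multiset.card Gc.roots = n := by
    rw [(splits_iff_card_roots).mp (IsAlgClosed.splits Gc), hGcdeg]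
  have hrne : Gc.roots ≠ 0 := by
    intro h; rw [h] at hcard; simp at hcard; omega
  -- Part 1: real coefficients
  have hmapconj : Gc.map (starRingEnd ℂ) = Gc := by
    rw [hGc, Polynomial.map_map]
    congr 1
    ext x
    simp [Complex.conj_ofReal]
  have hconjcomp : Gc.comp (X + C (I * a)) = (Gc.comp (X - C (I * a))).map (starRingEnd ℂ) := by
    rw [Polynomial.map_comp, hmapconj]
    congr 1
    rw [Polynomial.map_sub, Polynomial.map_X, Polynomial.map_C]
    simp only [map_mul, Complex.conj_I, Complex.conj_ofReal, map_neg]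
    ring
  have part1 : ∀ k : ℕ, (H.coeff k).im = 0 := by
    intro k
    have hexp : Complex.exp (↑b * I) = starRingEnd ℂ (Complex.exp (-(↑b * I))) := by
      rw [← Complex.exp_conj]
      congr 1
      simp [Complex.conj_ofReal]
    rw [hH, coeff_add, coeff_C_mul, coeff_C_mul, hconjcomp, coeff_map, hexp, ← map_mul]
    simp only [Complex.add_im, Complex.conj_im]
    ring
  -- Part 2: real roots
  have part2 : ∀ z : ℂ, H.eval z = 0 → z.im = 0 := by
    intro z hz
    rw [hH] at hz
    simp only [eval_add, eval_mul, eval_C, eval_comp, eval_sub, eval_X] at hz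
    have heval : Complex.exp (-(↑b * I)) * Gc.eval (z - I * a)
        = -(Complex.exp (↑b * I) * Gc.eval (z + I * a)) := by linear_combination hz
    have habs : ‖Gc.eval (z - I * a)‖ = ‖Gc.eval (z + I * a)‖ := by
      have h1 := congrArg (‖·‖) heval
      rw [norm_mul, norm_neg, norm_mul, Complex.norm_exp, Complex.norm_exp] at h1
      simpa using h1
    by_contra him
    rw [my_abs_eval, my_abs_eval] at habs
    have hlpos : 0 < ‖Gc.leadingCoeff‖ := norm_pos_iff.mpr hlead
    have habs2 : ((Gc.roots.map fun r => ‖z - I * a - r‖)).prod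
        = ((Gc.roots.map fun r => ‖z + I * a - r‖)).prod :=
      mul_left_cancel₀ (ne_of_gt hlpos) habs
    rcases lt_trichotomy z.im 0 with hneg | h0 | hpos
    · have := my_prod_lt (fun r => ‖z + I * a - r‖)
        (fun r => ‖z - I * a - r‖) Gc.roots hrne
        (fun r _ => norm_nonneg _)
        (fun r hr => my_factor_lt' z a ha hneg r (hrootsre r hr))
      rw [habs2] at this
      exact lt_irrefl _ this
    · exact him h0
    · have := my_prod_lt (fun r => ‖z - I * a - r‖)
        (fun r => ‖z + I * a - r‖) Gc.roots hrne
        (fun r _ => norm_nonneg _)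
        (fun r hr => my_factor_lt z a ha hpos r (hrootsre r hr))
      rw [habs2] at this
      exact lt_irrefl _ this
  -- Part 3/4: degree
  have hcomp1 : Gc.comp (X - C (I * ↑a)) = taylor (-(I * ↑a)) Gc := by
    rw [taylor_apply, map_neg, ← sub_eq_add_neg]
  have hcomp2 : Gc.comp (X + C (I * ↑a)) = taylor (I * ↑a) Gc := (taylor_apply _ _).symm
  have hcoeffn : ∀ r : ℂ, ((taylor r) Gc).coeff n = Gc.coeff n := by
    intro r
    rw [taylor_coeff]
    have hd : ((hasseDeriv n) Gc).natDegree < 1 := by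
      have := natDegree_hasseDeriv_le Gc n
      omega
    rw [eval_eq_sum_range' hd]
    simp [hasseDeriv_coeff]
  have hchoose : n.choose (n - 1) = n := by
    rw [Nat.choose_symm hn, Nat.choose_one_right]
  have hcoeffn1 : ∀ r : ℂ, ((taylor r) Gc).coeff (n - 1) = Gc.coeff (n - 1) + n * Gc.coeff n * r := by
    intro r
    rw [taylor_coeff]
    have hd : ((hasseDeriv (n - 1)) Gc).natDegree < 2 := by
      have := natDegree_hasseDeriv_le Gc (n - 1)
      omega
    rw [eval_eq_sum_range' hd, Finset.sum_range_succ, Finset.sum_range_one]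
    simp only [hasseDeriv_coeff, pow_zero, pow_one, mul_one, zero_add, Nat.choose_self]
    rw [show 1 + (n - 1) = n from by omega, hchoose]
    push_cast
    ring
  have he1 : Complex.exp (-(↑b * I)) = (Real.cos b : ℂ) - Real.sin b * I := by
    rw [show -((b : ℂ) * I) = (-(b : ℂ)) * I from by ring, Complex.exp_mul_I, Complex.cos_neg,
      Complex.sin_neg, ← Complex.ofReal_cos, ← Complex.ofReal_sin]
    ring
  have he2 : Complex.exp (↑b * I) = (Real.cos b : ℂ) + Real.sin b * I := by
    rw [Complex.exp_mul_I, ← Complex.ofReal_cos, ← Complex.ofReal_sin]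
  have hcn : H.coeff n = 2 * Real.cos b * Gc.coeff n := by
    rw [hH, coeff_add, coeff_C_mul, coeff_C_mul, hcomp1, hcomp2, hcoeffn, hcoeffn, he1, he2]
    ring
  have hcn1 : H.coeff (n - 1) = 2 * Real.cos b * Gc.coeff (n - 1)
      - 2 * a * Real.sin b * (n * Gc.coeff n) := by
    rw [hH, coeff_add, coeff_C_mul, coeff_C_mul, hcomp1, hcomp2, hcoeffn1, hcoeffn1, he1, he2]
    linear_combination (2 * (a : ℂ) * Real.sin b * (n * Gc.coeff n)) * Complex.I_sq
  have hd1 : (Gc.comp (X - C (I * ↑a))).natDegree = n := by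
    rw [natDegree_comp, natDegree_X_sub_C, hGcdeg, mul_one]
  have hd2 : (Gc.comp (X + C (I * ↑a))).natDegree = n := by
    rw [natDegree_comp, natDegree_X_add_C, hGcdeg, mul_one]
  have hHle : H.natDegree ≤ n := by
    rw [hH]
    refine le_trans (natDegree_add_le _ _) (max_le ?_ ?_)
    · exact le_trans (natDegree_C_mul_le _ _) hd1.le
    · exact le_trans (natDegree_C_mul_le _ _) hd2.le
  have hGn0 : Gc.coeff n ≠ 0 := by
    rw [← hGcdeg]
    exact mt leadingCoeff_eq_zero.mp hGcne
  refine ⟨part1, part2, ?_, ?_⟩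
  · intro hcos
    have hne : H.coeff n ≠ 0 := by
      rw [hcn]
      exact mul_ne_zero (mul_ne_zero two_ne_zero (by exact_mod_cast hcos)) hGn0
    exact le_antisymm hHle (le_natDegree_of_ne_zero hne)
  · intro hcos
    have hsin : Real.sin b ≠ 0 := by
      intro h
      have h2 := Real.sin_sq_add_cos_sq b
      rw [h, hcos] at h2
      norm_num at h2
    have h0 : H.coeff n = 0 := by rw [hcn, hcos]; simp
    have h1 : H.coeff (n - 1) ≠ 0 := by
      rw [hcn1, hcos]
      simp only [Complex.ofReal_zero, mul_zero, zero_mul, zero_sub, neg_ne_zero]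
      refine mul_ne_zero (mul_ne_zero (mul_ne_zero two_ne_zero ?_) ?_) (mul_ne_zero ?_ hGn0)
      · exact_mod_cast ha.ne'
      · exact_mod_cast hsin
      · exact_mod_cast (by omega : n ≠ 0)
    have hne : H ≠ 0 := fun h => h1 (by simp [h])
    have hge : n - 1 ≤ H.natDegree := le_natDegree_of_ne_zero h1
    have hnn : H.natDegree ≠ n := by
      intro h
      apply leadingCoeff_ne_zero.mpr hne
      rw [leadingCoeff, h, h0]
    omega





theorem shifted_sum_poly_real_rooted_degree (G : Polynomial ℝ)
    (hroots : ∀ z : ℂ, (G.map (algebraMap ℝ ℂ)).eval z = 0 → z.im = 0)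
    (n : ℕ) (hdeg : G.natDegree = n) (hn : 1 ≤ n)
    (a b : ℝ) (ha : 0 < a) :
    let H : Polynomial ℂ :=
      Polynomial.C (Complex.exp (-(b * I))) *
          (G.map (algebraMap ℝ ℂ)).comp (Polynomial.X - Polynomial.C (I * a))
        + Polynomial.C (Complex.exp (b * I)) *
          (G.map (algebraMap ℝ ℂ)).comp (Polynomial.X + Polynomial.C (I * a))
    (∀ k : ℕ, (H.coeff k).im = 0) ∧
    (∀ z : ℂ, H.eval z = 0 → z.im = 0) ∧
    (Real.cos b ≠ 0 → H.natDegree = n) ∧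
    (Real.cos b = 0 → H.natDegree = n - 1) := by
  intro H
  exact my_main G hroots n hdeg hn a b ha H rfl
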